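/- arXiv:2106.13160 — 3 statements merged into one kernel-verified Lean document; each statement's English description precedes it below -/
import Mathlib

section
/- For every real number σ > 2 there exists a constant c(σ) > e^3 such that for all real numbers x, y with c(σ) ≤ y ≤ x, one has ln^σ(x+y) - ln^σ(x) - (1/2)·ln^σ(y) ≤ 0, where ln^σ(t) denotes (ln t)^σ. -/
open Real

/-- For every σ > 2 there is a constant c(σ) > e³ such that for all
c(σ) ≤ y ≤ x, one has ln^σ(x+y) - ln^σ(x) - (1/2)·ln^σ(y) ≤ 0. -/
theorem stmt0 (σ : ℝ) (hσ : 2 < σ) :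
    ∃ c : ℝ, Real.exp 3 < c ∧
      ∀ x y : ℝ, c ≤ y → y ≤ x →
        Real.log (x + y) ^ σ - Real.log x ^ σ - (1 / 2) * Real.log y ^ σ ≤ 0 := by
  have hσ0 : (0:ℝ) < σ := by linarith
  have he1 : (1:ℝ) ≤ Real.exp 1 := by
    have := Real.add_one_le_exp (1:ℝ); linarith
  set L : ℝ := max 4 (2 * Real.exp 1 * σ) with hLdef
  refine ⟨Real.exp L, ?_, ?_⟩
  · exact Real.exp_lt_exp.mpr (lt_of_lt_of_le (by norm_num) (le_max_left _ _))
  intro x y hcy hyx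
  have hy0 : 0 < y := lt_of_lt_of_le (Real.exp_pos L) hcy
  have hx0 : 0 < x := lt_of_lt_of_le hy0 hyx
  set s := Real.log y with hsdef
  set t := Real.log x with htdef
  have hLs : L ≤ s := (Real.le_log_iff_exp_le hy0).mpr hcy
  have hs4 : (4:ℝ) ≤ s := le_trans (le_max_left _ _) hLs
  have hse : 2 * Real.exp 1 * σ ≤ s := le_trans (le_max_right _ _) hLs
  have hσs : σ ≤ s := by nlinarith
  have hst : s ≤ t := Real.log_le_log hy0 hyx
  have hs0 : (0:ℝ) < s := by linarith
  have ht0 : (0:ℝ) < t := by linarith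
  set δ := y / x with hδdef
  have hδ0 : 0 < δ := div_pos hy0 hx0
  have hδ1 : δ ≤ 1 := (div_le_one hx0).mpr hyx
  -- step A : log (x+y) ≤ t + δ
  have hA : Real.log (x + y) ≤ t + δ := by
    have h1 : Real.log ((x + y) / x) ≤ (x + y) / x - 1 :=
      Real.log_le_sub_one_of_pos (div_pos (by linarith) hx0)
    have h2 : Real.log ((x + y) / x) = Real.log (x + y) - t := by
      rw [htdef]; exact Real.log_div (by positivity) (ne_of_gt hx0)
    have h3 : (x + y) / x - 1 = δ := by rw [hδdef]; field_simp; ring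
    rw [h2, h3] at h1; linarith
  have hxy0 : 0 ≤ Real.log (x + y) := by
    apply Real.log_nonneg
    have h1 : (1:ℝ) ≤ Real.exp L := by
      rw [show (1:ℝ) = Real.exp 0 by simp]
      exact Real.exp_le_exp.mpr (by positivity)
    linarith
  -- step B : monotonicity of rpow in base
  have hB : Real.log (x + y) ^ σ ≤ (t + δ) ^ σ :=
    Real.rpow_le_rpow hxy0 hA hσ0.le
  -- step C : (t+δ)^σ ≤ t^σ * exp (σ * (δ/t))
  set z := σ * (δ / t) with hzdef
  have hz0 : 0 ≤ z := by positivity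
  have hz1 : z ≤ 1 := by
    rw [hzdef, mul_div_assoc'] at *
    rw [div_le_one ht0]
    nlinarith
  have hC : (t + δ) ^ σ ≤ t ^ σ * Real.exp z := by
    have h1 : t + δ = t * (1 + δ / t) := by field_simp
    have h2 : (1 : ℝ) + δ / t ≤ Real.exp (δ / t) := by
      have := Real.add_one_le_exp (δ / t); linarith
    have h3 : (0:ℝ) ≤ 1 + δ / t := by positivity
    calc (t + δ) ^ σ = t ^ σ * (1 + δ / t) ^ σ := by
          rw [h1, Real.mul_rpow ht0.le h3]
      _ ≤ t ^ σ * (Real.exp (δ / t)) ^ σ := by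
          gcongr
      _ = t ^ σ * Real.exp z := by
          rw [← Real.exp_mul, hzdef, mul_comm (δ / t) σ]
  -- step D : exp z - 1 ≤ z * exp 1
  have hD : Real.exp z - 1 ≤ z * Real.exp 1 := by
    have h1 : 1 - z ≤ Real.exp (-z) := by
      have := Real.add_one_le_exp (-z); linarith
    have h2 : Real.exp z * Real.exp (-z) = 1 := by
      rw [← Real.exp_add]; simp
    have h3 : Real.exp z ≤ Real.exp 1 := Real.exp_le_exp.mpr hz1
    nlinarith [Real.exp_pos z]
  -- t^σ = t^(σ-1) * t and s^σ = s^(σ-1) * s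
  have htpow : t ^ σ = t ^ (σ - 1) * t := by
    have h := Real.rpow_add ht0 (σ - 1) 1
    rw [Real.rpow_one, show σ - 1 + 1 = σ by ring] at h
    exact h
  have hspow : s ^ σ = s ^ (σ - 1) * s := by
    have h := Real.rpow_add hs0 (σ - 1) 1
    rw [Real.rpow_one, show σ - 1 + 1 = σ by ring] at h
    exact h
  -- step E : t^(σ-1) * δ ≤ s^(σ-1)
  have hE : t ^ (σ - 1) * δ ≤ s ^ (σ - 1) := by
    have hys : y = Real.exp s := (Real.exp_log hy0).symm
    have hxt : x = Real.exp t := (Real.exp_log hx0).symm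
    have hδexp : δ = Real.exp (s - t) := by
      rw [hδdef, hys, hxt, ← Real.exp_sub]
    have h1 : t = s * (t / s) := by field_simp
    have h2 : t / s ≤ Real.exp ((t - s) / s) := by
      have := Real.add_one_le_exp ((t - s) / s)
      have h : (t - s) / s + 1 = t / s := by field_simp; ring
      linarith
    have h3 : t ^ (σ - 1) ≤ s ^ (σ - 1) * Real.exp (t - s) := by
      have hts0 : 0 ≤ t / s := by positivity
      calc t ^ (σ - 1) = s ^ (σ - 1) * (t / s) ^ (σ - 1) := by
            rw [← Real.mul_rpow hs0.le hts0, ← h1]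
        _ ≤ s ^ (σ - 1) * (Real.exp ((t - s) / s)) ^ (σ - 1) := by
            apply mul_le_mul_of_nonneg_left
              (Real.rpow_le_rpow hts0 h2 (by linarith)) (by positivity)
        _ = s ^ (σ - 1) * Real.exp ((t - s) / s * (σ - 1)) := by
            rw [← Real.exp_mul]
        _ ≤ s ^ (σ - 1) * Real.exp (t - s) := by
            apply mul_le_mul_of_nonneg_left _ (by positivity)
            apply Real.exp_le_exp.mpr
            rw [div_mul_eq_mul_div, div_le_iff₀ hs0]
            nlinarith
    calc t ^ (σ - 1) * δ ≤ (s ^ (σ - 1) * Real.exp (t - s)) * δ := by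
          apply mul_le_mul_of_nonneg_right h3 hδ0.le
      _ = s ^ (σ - 1) := by
          rw [hδexp, mul_assoc, ← Real.exp_add,
            show t - s + (s - t) = 0 by ring, Real.exp_zero, mul_one]
  clear_value s t δ z
  -- step G : exp 1 * σ * s^(σ-1) ≤ (1/2) * s^σ
  have hsp0 : (0:ℝ) < s ^ (σ - 1) := Real.rpow_pos_of_pos hs0 _
  have hG : Real.exp 1 * σ * s ^ (σ - 1) ≤ (1 / 2) * s ^ σ := by
    rw [hspow]
    have h := mul_le_mul_of_nonneg_left hse hsp0.le
    linarith [h]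
  -- combine
  have htp0 : (0:ℝ) < t ^ σ := Real.rpow_pos_of_pos ht0 _
  have hchain : t ^ σ * Real.exp z - t ^ σ ≤ Real.exp 1 * σ * t ^ (σ - 1) * δ := by
    have h1 : t ^ σ * Real.exp z - t ^ σ ≤ t ^ σ * (z * Real.exp 1) := by
      have h := mul_le_mul_of_nonneg_left hD htp0.le
      linarith [h]
    have h2 : t ^ σ * (z * Real.exp 1) = Real.exp 1 * σ * t ^ (σ - 1) * δ := by
      rw [hzdef, htpow]; field_simp
    linarith
  have hEe : Real.exp 1 * σ * t ^ (σ - 1) * δ ≤ Real.exp 1 * σ * s ^ (σ - 1) := by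
    rw [mul_assoc]
    apply mul_le_mul_of_nonneg_left hE (by positivity)
  linarith
end

section
/- For σ > 2 and δ ∈ (0,1), the sum over positive integers j of e^{-δ (ln j)^σ} is at most (6/δ)·exp((2/δ)^{1/(σ-1)}). -/
open Real

/-- For σ > 2 and δ ∈ (0,1), the series ∑_{j ≥ 1} e^{-δ (ln j)^σ} converges and
is at most (6/δ)·exp((2/δ)^{1/(σ-1)}). -/
theorem stmt4 (σ δ : ℝ) (hσ : 2 < σ) (hδ0 : 0 < δ) (hδ1 : δ < 1) :
    Summable (fun j : ℕ+ => Real.exp (-δ * Real.log (j : ℝ) ^ σ)) ∧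
      (∑' j : ℕ+, Real.exp (-δ * Real.log (j : ℝ) ^ σ)) ≤
        (6 / δ) * Real.exp ((2 / δ) ^ (1 / (σ - 1))) := by
  have hσ1 : (0:ℝ) < σ - 1 := by linarith
  set A : ℝ := (2 / δ) ^ (1 / (σ - 1)) with hAdef
  have h2δ : (1:ℝ) < 2 / δ := by
    rw [lt_div_iff₀ hδ0]; linarith
  have hA1 : 1 < A := by
    apply Real.one_lt_rpow_iff_of_pos (by linarith) |>.mpr
    exact Or.inl ⟨h2δ, by positivity⟩
  have hAσ : A ^ (σ - 1) = 2 / δ := by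
    rw [hAdef, one_div, Real.rpow_inv_rpow (by linarith) (ne_of_gt hσ1)]
  set N : ℕ := ⌈Real.exp A⌉₊ with hNdef
  have hexpA : (1:ℝ) ≤ Real.exp A := by
    have := Real.exp_pos A
    nlinarith [Real.add_one_le_exp A]
  have hNle : (N : ℝ) ≤ Real.exp A + 1 := by
    have := Nat.ceil_lt_add_one (by positivity : (0:ℝ) ≤ Real.exp A)
    linarith
  -- work over ℕ via the shift
  set F : ℕ → ℝ := fun n => Real.exp (-δ * Real.log ((n:ℝ) + 1) ^ σ) with hF
  have htrans : ∀ (f : ℕ+ → ℝ), ∑' j : ℕ+, f j = ∑' n : ℕ, f n.succPNat :=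
    fun f => (Equiv.pnatEquivNat.symm.tsum_eq f).symm
  have hcast : ∀ n : ℕ, ((n.succPNat : ℕ+) : ℝ) = (n : ℝ) + 1 := by
    intro n; simp [Nat.succPNat]
  -- bounding functions
  set G1 : ℕ → ℝ := fun n => if n + 1 ≤ N then (1:ℝ) else 0 with hG1
  set G2 : ℕ → ℝ := fun n => 1 / ((n:ℝ) + 1) ^ 2 with hG2
  have hG1sum : Summable G1 := by
    apply summable_of_ne_finset_zero (s := Finset.range N)
    intro n hn
    simp only [Finset.mem_range, not_lt] at hn
    simp only [hG1]
    rw [if_neg]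
    omega
  have hG2sum : Summable G2 := by
    have h := Real.summable_one_div_nat_pow.mpr (by norm_num : 1 < 2)
    have := h.comp_injective Nat.succ_injective
    refine this.congr fun n => ?_
    simp [Function.comp, hG2]
  have hG2tsum : ∑' n, G2 n ≤ 2 := by
    have hz := hasSum_zeta_two
    have hs : Summable (fun n : ℕ => (1:ℝ) / (n:ℝ) ^ 2) := hz.summable
    have h0 : ∑' n : ℕ, (1:ℝ) / (n:ℝ) ^ 2
        = (1:ℝ) / (0:ℝ) ^ 2 + ∑' n : ℕ, (1:ℝ) / ((n:ℝ) + 1) ^ 2 := by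
      rw [Summable.tsum_eq_zero_add hs]
      simp only [Nat.cast_zero, Nat.cast_add, Nat.cast_one]
    have : ∑' n, G2 n = π ^ 2 / 6 := by
      rw [hG2, ← hz.tsum_eq, h0]
      norm_num
    rw [this]
    nlinarith [Real.pi_lt_d2, Real.pi_pos]
  have hG1tsum : ∑' n, G1 n ≤ (N : ℝ) := by
    rw [tsum_eq_sum (s := Finset.range N) (by
      intro n hn
      simp only [Finset.mem_range, not_lt] at hn
      simp [hG1]; omega)]
    calc ∑ n ∈ Finset.range N, G1 n ≤ ∑ n ∈ Finset.range N, 1 := by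
          apply Finset.sum_le_sum; intro i _; simp [hG1]; split <;> norm_num
      _ = (N : ℝ) := by simp
  -- the key pointwise bound
  have key : ∀ n : ℕ, F n ≤ G1 n + G2 n := by
    intro n
    have hj1 : (1:ℝ) ≤ (n:ℝ) + 1 := by
      have h : (0:ℝ) ≤ (n:ℝ) := Nat.cast_nonneg n
      linarith
    have hlog0 : 0 ≤ Real.log ((n:ℝ) + 1) := Real.log_nonneg hj1
    by_cases hn : n + 1 ≤ N
    · have h1 : F n ≤ 1 := by
        rw [hF]
        simp only
        rw [Real.exp_le_one_iff]
        have : 0 ≤ Real.log ((n:ℝ) + 1) ^ σ := Real.rpow_nonneg hlog0 σ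
        nlinarith
      have h2 : 0 ≤ G2 n := by show (0:ℝ) ≤ 1/((n:ℝ)+1)^2; positivity
      simp only [hG1, if_pos hn]
      linarith
    · -- n + 1 > N, so (n+1 : ℝ) > exp A
      have hgt : Real.exp A < (n:ℝ) + 1 := by
        have hnat : N < n + 1 := by omega
        have h1 : (N:ℝ) < (n:ℝ) + 1 := by exact_mod_cast hnat
        have h2 : Real.exp A ≤ (N : ℝ) := Nat.le_ceil _
        linarith
      have hlogA : A < Real.log ((n:ℝ) + 1) := by
        have h := Real.log_lt_log (Real.exp_pos A) hgt
        rwa [Real.log_exp] at h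
      set L := Real.log ((n:ℝ) + 1) with hL
      have hL0 : 0 < L := by linarith
      have hpow : (2 / δ) * L ≤ L ^ σ := by
        have e1 : L ^ σ = L ^ (σ - 1) * L := by
          nth_rewrite 1 [show σ = (σ - 1) + 1 by ring]
          rw [Real.rpow_add_one hL0.ne']
        rw [e1]
        have : A ^ (σ - 1) ≤ L ^ (σ - 1) :=
          Real.rpow_le_rpow (by linarith) (le_of_lt hlogA) (le_of_lt hσ1)
        rw [hAσ] at this
        nlinarith
      have hexp : F n ≤ 1 / ((n:ℝ) + 1) ^ 2 := by
        have h1 : -δ * L ^ σ ≤ -(2 * L) := by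
          have : 2 * L ≤ δ * L ^ σ := by
            have := mul_le_mul_of_nonneg_left hpow (le_of_lt hδ0)
            calc 2 * L = δ * ((2/δ) * L) := by field_simp
              _ ≤ δ * L ^ σ := this
          linarith
        have h2 : Real.exp (-(2 * L)) = 1 / ((n:ℝ) + 1) ^ 2 := by
          have hjpos : (0:ℝ) < (n:ℝ) + 1 := by linarith
          have : ((n:ℝ) + 1) ^ (-2 : ℝ) = Real.exp (Real.log ((n:ℝ)+1) * (-2)) :=
            Real.rpow_def_of_pos hjpos _
          rw [Real.rpow_neg hjpos.le, Real.rpow_two] at this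
          rw [← hL] at this
          rw [show -(2*L) = L * (-2) by ring, ← this, one_div]
        rw [hF]
        simp only
        rw [← h2]
        exact Real.exp_le_exp.mpr h1
      have h1 : G1 n = 0 := by simp [hG1, hn]; omega
      rw [h1, zero_add]
      exact hexp
  have hFnonneg : ∀ n, 0 ≤ F n := fun n => (Real.exp_pos _).le
  have hFsum : Summable F :=
    Summable.of_nonneg_of_le hFnonneg key (hG1sum.add hG2sum)
  have hFeq : (fun j : ℕ+ => Real.exp (-δ * Real.log (j : ℝ) ^ σ)) ∘ Nat.succPNat = F := by
    funext n
    simp only [Function.comp, hF, hcast]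
  have hsum : Summable (fun j : ℕ+ => Real.exp (-δ * Real.log (j : ℝ) ^ σ)) := by
    rw [← Equiv.summable_iff Equiv.pnatEquivNat.symm]
    show Summable ((fun j : ℕ+ => Real.exp (-δ * Real.log (j : ℝ) ^ σ)) ∘ Nat.succPNat)
    rw [hFeq]; exact hFsum
  refine ⟨hsum, ?_⟩
  have heq : (∑' j : ℕ+, Real.exp (-δ * Real.log (j : ℝ) ^ σ)) = ∑' n, F n := by
    rw [htrans]
    exact tsum_congr fun n => by rw [hcast]
  rw [heq]
  have hb : ∑' n, F n ≤ ∑' n, (G1 n + G2 n) :=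
    Summable.tsum_le_tsum key hFsum (hG1sum.add hG2sum)
  have hb2 : ∑' n, (G1 n + G2 n) = ∑' n, G1 n + ∑' n, G2 n := Summable.tsum_add hG1sum hG2sum
  have hfinal : (N:ℝ) + 2 ≤ (6/δ) * Real.exp A := by
    have h6 : (4:ℝ) ≤ 6 / δ := by
      rw [le_div_iff₀ hδ0]; nlinarith
    have := Real.exp_pos A
    nlinarith
  calc ∑' n, F n ≤ (N:ℝ) + 2 := by rw [hb2] at hb; linarith
    _ ≤ (6/δ) * Real.exp A := hfinal
end

section
/- Let (n_i)_{1≤i≤m} be a finite sequence of integers with |n₁| ≥ |n₂| ≥ ⋯ ≥ |n_m| and satisfying the alternating sum condition n₁ − n₂ + n₃ − ⋯ + (−1)^{m+1} n_m = 0. Then ∑_{i=1}^m √|n_i| − 2√|n₁| ≥ (1/4)·∑_{i=3}^m √|n_i|. -/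
open Real

set_option maxHeartbeats 1000000 in
/-- Bourgain's inequality: if |n₁| ≥ |n₂| ≥ ⋯ ≥ |n_m| and the alternating sum
n₁ - n₂ + n₃ - ⋯ vanishes, then ∑√|n_i| - 2√|n₁| ≥ (1/4)∑_{i≥3}√|n_i|. -/
theorem stmt13 (m : ℕ) (hm : 2 ≤ m) (n : Fin m → ℤ)
    (hsorted : ∀ i j : Fin m, i ≤ j → |n j| ≤ |n i|)
    (halt : ∑ i : Fin m, (-1 : ℤ) ^ (i : ℕ) * n i = 0) :
    (∑ i : Fin m, Real.sqrt |(n i : ℝ)|) - 2 * Real.sqrt |(n ⟨0, by omega⟩ : ℝ)| ≥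
      (1 / 4) * ∑ i ∈ Finset.univ.filter (fun i : Fin m => 2 ≤ (i : ℕ)),
        Real.sqrt |(n i : ℝ)| := by
  have h0m : 0 < m := by omega
  set i0 : Fin m := ⟨0, by omega⟩ with hi0
  set i1 : Fin m := ⟨1, by omega⟩ with hi1
  have hne : i1 ≠ i0 := by simp [hi0, hi1, Fin.ext_iff]
  set s : Finset (Fin m) := Finset.univ.filter (fun i : Fin m => 2 ≤ (i : ℕ)) with hs
  have hset : (Finset.univ.erase i0).erase i1 = s := by
    ext i
    simp only [Finset.mem_erase, Finset.mem_univ, and_true, hs, Finset.mem_filter, true_and,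
      Fin.ext_iff, hi0, hi1, ne_eq]
    omega
  -- decompose sums over Fin m
  have hsplit : ∀ f : Fin m → ℝ, ∑ i : Fin m, f i = f i0 + (f i1 + ∑ i ∈ s, f i) := by
    intro f
    rw [← Finset.add_sum_erase _ f (Finset.mem_univ i0),
      ← Finset.add_sum_erase _ f (Finset.mem_erase.2 ⟨hne, Finset.mem_univ i1⟩), hset]
  have hsplitZ : ∀ f : Fin m → ℤ, ∑ i : Fin m, f i = f i0 + (f i1 + ∑ i ∈ s, f i) := by
    intro f
    rw [← Finset.add_sum_erase _ f (Finset.mem_univ i0),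
      ← Finset.add_sum_erase _ f (Finset.mem_erase.2 ⟨hne, Finset.mem_univ i1⟩), hset]
  -- integer triangle inequality from the vanishing alternating sum
  have hZ : |n i0| ≤ |n i1| + ∑ i ∈ s, |n i| := by
    have h := hsplitZ (fun i => (-1 : ℤ) ^ (i : ℕ) * n i)
    rw [halt] at h
    have h0 : ((-1 : ℤ)) ^ ((i0 : Fin m) : ℕ) = 1 := by simp [hi0]
    rw [h0, one_mul] at h
    have e : n i0 = -((-1 : ℤ) ^ ((i1 : Fin m) : ℕ) * n i1 + ∑ i ∈ s, (-1 : ℤ) ^ (i : ℕ) * n i) := by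
      linarith
    calc |n i0| = |(-1 : ℤ) ^ ((i1 : Fin m) : ℕ) * n i1 + ∑ i ∈ s, (-1 : ℤ) ^ (i : ℕ) * n i| := by
          rw [e, abs_neg]
      _ ≤ |(-1 : ℤ) ^ ((i1 : Fin m) : ℕ) * n i1| + |∑ i ∈ s, (-1 : ℤ) ^ (i : ℕ) * n i| :=
          abs_add_le _ _
      _ ≤ |n i1| + ∑ i ∈ s, |n i| := by
          refine add_le_add (le_of_eq ?_) ((Finset.abs_sum_le_sum_abs _ _).trans
            (le_of_eq (Finset.sum_congr rfl fun i _ => ?_)))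
          · simp [abs_mul, abs_pow]
          · simp [abs_mul, abs_pow]
  -- real quantities
  set a : ℝ := |(n i1 : ℝ)| with ha
  set B : ℝ := ∑ i ∈ s, |(n i : ℝ)| with hB
  set T : ℝ := ∑ i ∈ s, Real.sqrt |(n i : ℝ)| with hT
  clear_value a B T
  have ha0 : 0 ≤ a := ha ▸ abs_nonneg _
  have hB0 : 0 ≤ B := hB ▸ Finset.sum_nonneg fun i _ => abs_nonneg _
  have hT0 : 0 ≤ T := hT ▸ Finset.sum_nonneg fun i _ => Real.sqrt_nonneg _
  have hRle : |(n i0 : ℝ)| ≤ a + B := by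
    rw [ha, hB]
    push_cast
    exact_mod_cast (by exact_mod_cast hZ : (|n i0| : ℝ) ≤ (|n i1| : ℝ) + ∑ i ∈ s, (|n i| : ℝ))
  have hia : ∀ i ∈ s, |(n i : ℝ)| ≤ a := by
    intro i hi
    have h1i : i1 ≤ i := by
      rw [hs, Finset.mem_filter] at hi
      exact Fin.mk_le_of_le_val (by omega)
    have := hsorted i1 i h1i
    rw [ha]
    exact_mod_cast this
  -- B ≤ √a * T
  have hBT : B ≤ Real.sqrt a * T := by
    rw [hB, hT, Finset.mul_sum]
    refine Finset.sum_le_sum fun i hi => ?_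
    have := Real.sqrt_le_sqrt (hia i hi)
    nlinarith [Real.sq_sqrt (abs_nonneg ((n i : ℝ))), Real.sqrt_nonneg |(n i : ℝ)|,
      Real.sqrt_nonneg a]
  -- key inequality : √|n i0| ≤ √a + (3/4) T
  have hkey : Real.sqrt |(n i0 : ℝ)| ≤ Real.sqrt a + (3/4) * T := by
    rcases eq_or_lt_of_le ha0 with h | h
    · -- a = 0 : everything vanishes
      have hsa0 : Real.sqrt a = 0 := by rw [← h, Real.sqrt_zero]
      have hB' : B = 0 := by nlinarith [hBT]
      have : |(n i0 : ℝ)| = 0 := le_antisymm (by rw [← h] at hRle; linarith) (abs_nonneg _)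
      rw [this, Real.sqrt_zero]
      positivity
    · have hsa : 0 < Real.sqrt a := Real.sqrt_pos.2 h
      have step1 : Real.sqrt |(n i0 : ℝ)| ≤ Real.sqrt a + B / (2 * Real.sqrt a) := by
        have hc : 0 ≤ Real.sqrt a + B / (2 * Real.sqrt a) := by positivity
        have hmul : Real.sqrt a * (B / (2 * Real.sqrt a)) = B / 2 := by
          field_simp
        have hsq : a + B ≤ (Real.sqrt a + B / (2 * Real.sqrt a)) ^ 2 := by
          nlinarith [Real.sq_sqrt ha0, sq_nonneg (B / (2 * Real.sqrt a))]
        calc Real.sqrt |(n i0 : ℝ)| ≤ Real.sqrt (a + B) := Real.sqrt_le_sqrt hRle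
          _ ≤ Real.sqrt ((Real.sqrt a + B / (2 * Real.sqrt a)) ^ 2) := Real.sqrt_le_sqrt hsq
          _ = Real.sqrt a + B / (2 * Real.sqrt a) := Real.sqrt_sq hc
      have step2 : B / (2 * Real.sqrt a) ≤ (3/4) * T := by
        rw [div_le_iff₀ (by positivity)]
        nlinarith [hBT, hT0, hsa]
      linarith
  -- conclude
  rw [hsplit (fun i => Real.sqrt |(n i : ℝ)|)]
  have : (n (⟨0, by omega⟩ : Fin m) : ℝ) = (n i0 : ℝ) := rfl
  rw [this]
  rw [ge_iff_le, ← hT]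
  rw [ha] at hkey
  linarith
end
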